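/- Let |φ| < 1, let Σ(φ) be the q×q matrix with entries φ^{|i−j|}/(1−φ²), and let ψ ∈ ℝ with |ψ| < 1. Then ‖Σ(φ) − Σ(ψ)‖_∞ ≤ |φ − ψ| · K(φ, ψ) where K(φ, ψ) = |φ+ψ|/((1−φ²)(1−ψ²)) · (1 + 2/(1−|φ|)) + 2(1/(1−φ²) + |φ−ψ||φ+ψ|/((1−φ²)(1−ψ²))) · 1/((1−|φ|)(1−|ψ|)); in particular Σ(ψ) → Σ(φ) in ‖·‖_∞ as ψ → φ, uniformly in q. -/

import Mathlib

open Matrix Finset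

/-- The AR(1) covariance matrix `Σ(φ)_{i,j} = φ^{|i−j|}/(1−φ²)`. -/
noncomputable def arCov (q : ℕ) (φ : ℝ) : Matrix (Fin q) (Fin q) ℝ :=
  Matrix.of fun i j => φ ^ (Nat.dist i.val j.val) / (1 - φ ^ 2)

private lemma sum_comp_le {α β : Type*} [DecidableEq β] (s : Finset α) (t : Finset β)
    (e : α → β) (f : β → ℝ) (hinj : Set.InjOn e s) (hmap : ∀ a ∈ s, e a ∈ t)
    (hf : ∀ b ∈ t, 0 ≤ f b) : ∑ a ∈ s, f (e a) ≤ ∑ b ∈ t, f b := by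
  rw [← Finset.sum_image (fun a ha b hb h => hinj ha hb h)]
  refine Finset.sum_le_sum_of_subset_of_nonneg ?_ (fun b hb _ => hf b hb)
  intro b hb
  obtain ⟨a, ha, rfl⟩ := Finset.mem_image.1 hb
  exact hmap a ha

private lemma geom_bound {x : ℝ} (hx0 : 0 ≤ x) (hx1 : x < 1) (n : ℕ) :
    ∑ d ∈ range n, x ^ d ≤ 1 / (1 - x) := by
  have h1 : (0:ℝ) < 1 - x := by linarith
  rw [geom_sum_eq (by intro h; rw [h] at hx1; linarith) n]
  rw [show (x ^ n - 1) / (x - 1) = (1 - x ^ n) / (1 - x) by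
    rw [← neg_div_neg_eq]; ring_nf]
  have hxn : 0 ≤ x ^ n := by positivity
  gcongr
  linarith

private lemma double_geom_bound {x y : ℝ} (hx0 : 0 ≤ x) (hx1 : x < 1)
    (hy0 : 0 ≤ y) (hy1 : y < 1) (n : ℕ) :
    ∑ d ∈ range n, ∑ k ∈ range d, x ^ k * y ^ (d - 1 - k) ≤
      1 / (1 - x) * (1 / (1 - y)) := by
  have step1 : ∑ d ∈ range n, ∑ k ∈ range d, x ^ k * y ^ (d - 1 - k) ≤
      ∑ p ∈ range n ×ˢ range n, x ^ p.1 * y ^ p.2 := by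
    rw [Finset.sum_sigma']
    refine sum_comp_le ((range n).sigma fun d => range d) (range n ×ˢ range n)
      (fun p => (p.2, p.1 - 1 - p.2)) (fun p => x ^ p.1 * y ^ p.2)
      ?_ ?_ (fun b _ => by positivity)
    · intro p hp q hq h
      simp only [Finset.coe_sigma, Set.mem_sigma_iff, Finset.mem_coe, Finset.mem_range] at hp hq
      obtain ⟨d, k⟩ := p
      obtain ⟨d', k'⟩ := q
      simp only [Prod.mk.injEq] at h
      simp only [Finset.mem_range] at hp hq
      have : d = d' ∧ k = k' := by omega
      simp [this.1, this.2]
    · intro p hp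
      simp only [Finset.mem_sigma, Finset.mem_range] at hp
      simp only [Finset.mem_product, Finset.mem_range]
      omega
  refine step1.trans ?_
  rw [Finset.sum_product]
  have : ∑ a ∈ range n, ∑ b ∈ range n, x ^ a * y ^ b
      = (∑ a ∈ range n, x ^ a) * (∑ b ∈ range n, y ^ b) := by
    rw [Finset.sum_mul]
    exact Finset.sum_congr rfl fun a _ => by rw [Finset.mul_sum]
  rw [this]
  have h1 : (0:ℝ) ≤ ∑ a ∈ range n, x ^ a := Finset.sum_nonneg fun a _ => by positivity
  exact mul_le_mul (geom_bound hx0 hx1 n) (geom_bound hy0 hy1 n) (Finset.sum_nonneg fun a _ => by positivity) (one_div_nonneg.2 (by linarith))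

private lemma geom_sum_abs_diff_le {φ ψ : ℝ} (hφ : |φ| < 1) (hψ : |ψ| < 1) (n : ℕ) :
    ∑ d ∈ range n, |φ ^ d - ψ ^ d| ≤ |φ - ψ| * (1 / ((1 - |φ|) * (1 - |ψ|))) := by
  have key : ∑ d ∈ range n, |φ ^ d - ψ ^ d| ≤
      |φ - ψ| * ∑ d ∈ range n, ∑ k ∈ range d, |φ| ^ k * |ψ| ^ (d - 1 - k) := by
    rw [Finset.mul_sum]
    refine Finset.sum_le_sum fun d _ => ?_
    rw [← geom_sum₂_mul φ ψ d, abs_mul, mul_comm]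
    refine mul_le_mul_of_nonneg_left ?_ (abs_nonneg _)
    calc |∑ k ∈ range d, φ ^ k * ψ ^ (d - 1 - k)|
        ≤ ∑ k ∈ range d, |φ ^ k * ψ ^ (d - 1 - k)| := Finset.abs_sum_le_sum_abs _ _
      _ = ∑ k ∈ range d, |φ| ^ k * |ψ| ^ (d - 1 - k) := by
          refine Finset.sum_congr rfl fun k _ => ?_
          rw [abs_mul, abs_pow, abs_pow]
  refine key.trans ?_
  have h2 : (0:ℝ) ≤ 1 / ((1 - |φ|) * (1 - |ψ|)) :=
    (one_div_pos.2 (mul_pos (by linarith) (by linarith))).le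
  have hd := double_geom_bound (abs_nonneg φ) hφ (abs_nonneg ψ) hψ n
  have : 1 / (1 - |φ|) * (1 / (1 - |ψ|)) = 1 / ((1 - |φ|) * (1 - |ψ|)) := by
    rw [div_mul_div_comm, one_mul]
  rw [this] at hd
  exact mul_le_mul_of_nonneg_left hd (abs_nonneg _)

private lemma natDist_def (a b : ℕ) : Nat.dist a b = a - b + (b - a) := rfl

private lemma sum_dist_le {q : ℕ} (i : Fin q) (g : ℕ → ℝ) (hg : ∀ d, 0 ≤ g d) :
    ∑ j : Fin q, g (Nat.dist i.val j.val) ≤ 2 * ∑ d ∈ range q, g d := by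
  have h1 := Finset.sum_filter_add_sum_filter_not Finset.univ
    (fun j : Fin q => j.val ≤ i.val) (fun j => g (Nat.dist i.val j.val))
  have hA : ∑ j ∈ Finset.univ.filter (fun j : Fin q => j.val ≤ i.val),
      g (Nat.dist i.val j.val) ≤ ∑ d ∈ range q, g d := by
    refine sum_comp_le _ _ (fun j : Fin q => Nat.dist i.val j.val) g ?_ ?_ (fun b _ => hg b)
    · intro a ha b hb h
      simp only [Finset.coe_filter, Set.mem_setOf_eq, Finset.mem_univ, true_and] at ha hb
      have h' : Nat.dist i.val a.val = Nat.dist i.val b.val := h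
      have h1 := natDist_def i.val a.val
      have h2 := natDist_def i.val b.val
      exact Fin.ext (by omega)
    · intro a ha
      have := a.isLt
      have := i.isLt
      have h1 := natDist_def i.val a.val
      simp only [Finset.mem_filter, Finset.mem_univ, true_and] at ha
      simp only [Finset.mem_range]
      omega
  have hB : ∑ j ∈ Finset.univ.filter (fun j : Fin q => ¬ j.val ≤ i.val),
      g (Nat.dist i.val j.val) ≤ ∑ d ∈ range q, g d := by
    refine sum_comp_le _ _ (fun j : Fin q => Nat.dist i.val j.val) g ?_ ?_ (fun b _ => hg b)
    · intro a ha b hb h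
      simp only [Finset.coe_filter, Set.mem_setOf_eq, Finset.mem_univ, true_and] at ha hb
      have h' : Nat.dist i.val a.val = Nat.dist i.val b.val := h
      have h1 := natDist_def i.val a.val
      have h2 := natDist_def i.val b.val
      exact Fin.ext (by omega)
    · intro a ha
      have := a.isLt
      have := i.isLt
      have h1 := natDist_def i.val a.val
      simp only [Finset.mem_filter, Finset.mem_univ, true_and] at ha
      simp only [Finset.mem_range]
      omega
  calc ∑ j : Fin q, g (Nat.dist i.val j.val)
      = _ + _ := h1.symm
    _ ≤ (∑ d ∈ range q, g d) + ∑ d ∈ range q, g d := add_le_add hA hB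
    _ = 2 * ∑ d ∈ range q, g d := by ring

/-- Lipschitz-type bound, uniform in `q`, for the AR(1) covariance matrix in the
max absolute row sum norm. -/
theorem arCov_diff_linfty_bound {q : ℕ} (φ ψ : ℝ) (hφ : |φ| < 1) (hψ : |ψ| < 1) :
    ∀ i, ∑ j, |arCov q φ i j - arCov q ψ i j| ≤
      |φ - ψ| *
        (|φ + ψ| / ((1 - φ ^ 2) * (1 - ψ ^ 2)) * (1 + 2 / (1 - |φ|)) +
          2 * (1 / (1 - φ ^ 2) +
            |φ - ψ| * |φ + ψ| / ((1 - φ ^ 2) * (1 - ψ ^ 2))) *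
            (1 / ((1 - |φ|) * (1 - |ψ|)))) := by
  intro i
  have hφab := abs_lt.1 hφ
  have hψab := abs_lt.1 hψ
  have hφ2 : (0:ℝ) < 1 - φ ^ 2 := by nlinarith
  have hψ2 : (0:ℝ) < 1 - ψ ^ 2 := by nlinarith
  have hP : (0:ℝ) < (1 - φ ^ 2) * (1 - ψ ^ 2) := mul_pos hφ2 hψ2
  set C1 : ℝ := |φ - ψ| * |φ + ψ| / ((1 - φ ^ 2) * (1 - ψ ^ 2)) with hC1def
  set C2 : ℝ := 1 / (1 - φ ^ 2) + |φ - ψ| * |φ + ψ| / ((1 - φ ^ 2) * (1 - ψ ^ 2)) with hC2def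
  have hC1 : 0 ≤ C1 := div_nonneg (mul_nonneg (abs_nonneg _) (abs_nonneg _)) hP.le
  have hC2 : 0 ≤ C2 := add_nonneg (by positivity) (div_nonneg (mul_nonneg (abs_nonneg _) (abs_nonneg _)) hP.le)
  -- bound on 1/(1-ψ²)
  have hinv : 1 / (1 - ψ ^ 2) ≤ C2 := by
    rw [hC2def]
    have hnum : ψ ^ 2 - φ ^ 2 ≤ |φ - ψ| * |φ + ψ| := by
      calc ψ ^ 2 - φ ^ 2 ≤ |ψ ^ 2 - φ ^ 2| := le_abs_self _
        _ = |(φ - ψ) * (φ + ψ)| := by rw [abs_sub_comm]; congr 1; ring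
        _ = |φ - ψ| * |φ + ψ| := abs_mul _ _
    have e1 : 1 / (1 - ψ ^ 2) = (1 - φ ^ 2) / ((1 - φ ^ 2) * (1 - ψ ^ 2)) := by
      rw [div_eq_div_iff hψ2.ne' hP.ne']; ring
    have e2 : 1 / (1 - φ ^ 2) = (1 - ψ ^ 2) / ((1 - φ ^ 2) * (1 - ψ ^ 2)) := by
      rw [div_eq_div_iff hφ2.ne' hP.ne']; ring
    rw [e1, e2, ← add_div]
    gcongr
    linarith
  -- per-entry bound
  have hentry : ∀ j : Fin q, |arCov q φ i j - arCov q ψ i j| ≤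
      C1 * |φ| ^ (Nat.dist i.val j.val) +
        C2 * |φ ^ (Nat.dist i.val j.val) - ψ ^ (Nat.dist i.val j.val)| := by
    intro j
    set d := Nat.dist i.val j.val with hd
    have hrw : arCov q φ i j - arCov q ψ i j
        = φ ^ d * ((φ - ψ) * (φ + ψ) / ((1 - φ ^ 2) * (1 - ψ ^ 2)))
          + (φ ^ d - ψ ^ d) * (1 / (1 - ψ ^ 2)) := by
      show φ ^ d / (1 - φ ^ 2) - ψ ^ d / (1 - ψ ^ 2) = _
      field_simp
      ring
    rw [hrw]
    calc |φ ^ d * ((φ - ψ) * (φ + ψ) / ((1 - φ ^ 2) * (1 - ψ ^ 2)))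
          + (φ ^ d - ψ ^ d) * (1 / (1 - ψ ^ 2))|
        ≤ |φ ^ d * ((φ - ψ) * (φ + ψ) / ((1 - φ ^ 2) * (1 - ψ ^ 2)))|
          + |(φ ^ d - ψ ^ d) * (1 / (1 - ψ ^ 2))| := abs_add_le _ _
      _ = |φ| ^ d * C1 + |φ ^ d - ψ ^ d| * (1 / (1 - ψ ^ 2)) := by
          rw [abs_mul, abs_mul, abs_pow, hC1def]
          congr 2
          · rw [abs_div, abs_mul, abs_of_pos hP]
          · exact abs_of_pos (by positivity)
      _ ≤ C1 * |φ| ^ d + C2 * |φ ^ d - ψ ^ d| := by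
          have hb1 : |φ| ^ d * C1 = C1 * |φ| ^ d := mul_comm _ _
          have hb2 : |φ ^ d - ψ ^ d| * (1 / (1 - ψ ^ 2)) ≤ C2 * |φ ^ d - ψ ^ d| := by
            rw [mul_comm]
            exact mul_le_mul_of_nonneg_right hinv (abs_nonneg _)
          linarith
  have s1 : ∑ j : Fin q, |φ| ^ (Nat.dist i.val j.val) ≤ 2 * (1 / (1 - |φ|)) := by
    refine (sum_dist_le i (fun d => |φ| ^ d) (fun d => by positivity)).trans ?_
    have := geom_bound (abs_nonneg φ) hφ q
    linarith
  have s2 : ∑ j : Fin q, |φ ^ (Nat.dist i.val j.val) - ψ ^ (Nat.dist i.val j.val)|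
      ≤ 2 * (|φ - ψ| * (1 / ((1 - |φ|) * (1 - |ψ|)))) := by
    refine (sum_dist_le i (fun d => |φ ^ d - ψ ^ d|) (fun d => abs_nonneg _)).trans ?_
    have := geom_sum_abs_diff_le hφ hψ q
    linarith
  calc ∑ j, |arCov q φ i j - arCov q ψ i j|
      ≤ ∑ j : Fin q, (C1 * |φ| ^ (Nat.dist i.val j.val) +
          C2 * |φ ^ (Nat.dist i.val j.val) - ψ ^ (Nat.dist i.val j.val)|) :=
        Finset.sum_le_sum fun j _ => hentry j
    _ = C1 * ∑ j : Fin q, |φ| ^ (Nat.dist i.val j.val) +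
          C2 * ∑ j : Fin q, |φ ^ (Nat.dist i.val j.val) - ψ ^ (Nat.dist i.val j.val)| := by
        rw [Finset.sum_add_distrib, Finset.mul_sum, Finset.mul_sum]
    _ ≤ C1 * (2 * (1 / (1 - |φ|))) +
          C2 * (2 * (|φ - ψ| * (1 / ((1 - |φ|) * (1 - |ψ|))))) :=
        add_le_add (mul_le_mul_of_nonneg_left s1 hC1) (mul_le_mul_of_nonneg_left s2 hC2)
    _ ≤ _ := by
        rw [hC1def, hC2def]
        have hkey : |φ - ψ| *
            (|φ + ψ| / ((1 - φ ^ 2) * (1 - ψ ^ 2)) * (1 + 2 / (1 - |φ|)) +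
              2 * (1 / (1 - φ ^ 2) +
                |φ - ψ| * |φ + ψ| / ((1 - φ ^ 2) * (1 - ψ ^ 2))) *
                (1 / ((1 - |φ|) * (1 - |ψ|))))
            = |φ - ψ| * |φ + ψ| / ((1 - φ ^ 2) * (1 - ψ ^ 2)) * (2 * (1 / (1 - |φ|))) +
              (1 / (1 - φ ^ 2) +
                |φ - ψ| * |φ + ψ| / ((1 - φ ^ 2) * (1 - ψ ^ 2))) *
                (2 * (|φ - ψ| * (1 / ((1 - |φ|) * (1 - |ψ|))))) +
              |φ - ψ| * (|φ + ψ| / ((1 - φ ^ 2) * (1 - ψ ^ 2))) := by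
          ring
        have hpos : 0 ≤ |φ - ψ| * (|φ + ψ| / ((1 - φ ^ 2) * (1 - ψ ^ 2))) :=
          mul_nonneg (abs_nonneg _) (div_nonneg (abs_nonneg _) hP.le)
        linarith [hkey]
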